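/- For every integer k ≥ 1, the generating polynomials for Siladić-coloured partitions satisfy G_{(2k+1)_{ab}}(q;a,b) = G_{(2k)_b}(q;a,b) + a b q^{2k+1} G_{(2k−1)_a}(q;a,b). -/

import Mathlib

/-- The five colours of the weighted-words version of Siladić's theorem. -/
inductive SilColor : Type
  | a | b | ab | a2 | b2
  deriving DecidableEq

open SilColor

/-- Row of the difference matrix A for a part of odd size, of the given colour. -/
def silRowOdd : SilColor → SilColor → ℕ
  | a,  a => 2 | a,  b => 2 | a,  ab => 1 | a,  a2 => 2 | a,  b2 => 2
  | b2, a => 2 | b2, b => 3 | b2, ab => 2 | b2, a2 => 2 | b2, b2 => 4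
  | b,  a => 1 | b,  b => 2 | b,  ab => 1 | b,  a2 => 2 | b,  b2 => 2
  | a2, a => 3 | a2, b => 3 | a2, ab => 3 | a2, a2 => 4 | a2, b2 => 4
  | ab, a => 2 | ab, b => 3 | ab, ab => 2 | ab, a2 => 2 | ab, b2 => 3

/-- Row of the difference matrix A for a part of even size, of the given colour
(the colours a² and b² never occur on even parts, so those rows are irrelevant). -/
def silRowEven : SilColor → SilColor → ℕ
  | ab, a => 2 | ab, b => 2 | ab, ab => 2 | ab, a2 => 3 | ab, b2 => 3
  | a,  a => 2 | a,  b => 2 | a,  ab => 2 | a,  a2 => 3 | a,  b2 => 3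
  | b,  a => 1 | b,  b => 2 | b,  ab => 1 | b,  a2 => 1 | b,  b2 => 3
  | a2, a => 3 | a2, b => 3 | a2, ab => 3 | a2, a2 => 4 | a2, b2 => 4
  | b2, a => 2 | b2, b => 3 | b2, ab => 2 | b2, a2 => 2 | b2, b2 => 4

/-- Minimal difference A(x,y) between a part of size k and colour x and the next part of
colour y. -/
def silMinDiff (k : ℕ) (x y : SilColor) : ℕ :=
  if k % 2 = 1 then silRowOdd x y else silRowEven x y

/-- A valid coloured part: a positive integer; the colours a², b² occur only on odd
integers; the integer 1 may only carry colour a. -/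
def SilValidPart (p : ℕ × SilColor) : Prop :=
  0 < p.1 ∧ ((p.2 = a2 ∨ p.2 = b2) → p.1 % 2 = 1) ∧ (p.1 = 1 → p.2 = a)

/-- A Siladić-coloured partition: a finite sequence of valid coloured parts satisfying the
difference conditions of the matrix A. -/
def IsSiladicColoured (l : List (ℕ × SilColor)) : Prop :=
  (∀ p ∈ l, SilValidPart p) ∧
    l.Chain' (fun p q => q.1 + silMinDiff p.1 p.2 q.2 ≤ p.1)

/-- The number partitioned. -/
def silN (l : List (ℕ × SilColor)) : ℕ := (l.map Prod.fst).sum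

/-- The statistic u: number of parts coloured a or ab plus twice the number of parts
coloured a². -/
def silU (l : List (ℕ × SilColor)) : ℕ :=
  l.countP (fun p => decide (p.2 = a ∨ p.2 = ab)) + 2 * l.countP (fun p => decide (p.2 = a2))

/-- The statistic v: number of parts coloured b or ab plus twice the number of parts
coloured b². -/
def silV (l : List (ℕ × SilColor)) : ℕ :=
  l.countP (fun p => decide (p.2 = b ∨ p.2 = ab)) + 2 * l.countP (fun p => decide (p.2 = b2))

/-- The rank of the coloured integer k_x in the total order
1_{ab} < 1_a < 1_{b²} < 1_b < 2_{ab} < 2_a < 3_{a²} < 2_b < 3_{ab} < ⋯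
(obtained via the dilation k_a ↦ 4k−3, k_b ↦ 4k−1, k_{ab} ↦ 4k−4, k_{a²} ↦ 4k−6,
k_{b²} ↦ 4k−2). -/
def silRank (k : ℕ) (x : SilColor) : ℤ :=
  4 * k - (match x with | ab => 4 | a => 3 | b2 => 2 | b => 1 | a2 => 6)

/-- The generating polynomial G_{k_x}(q;a,b) for Siladić-coloured partitions with largest
part at most k_x, as a (polynomial) multivariate power series in the variables
q (index 0), a (index 1), b (index 2): the coefficient of a^u b^v q^n is the number of
Siladić-coloured partitions of n with statistics u, v and largest part at most k_x. -/
noncomputable def silG (k : ℕ) (x : SilColor) : MvPowerSeries (Fin 3) ℤ :=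
  fun m =>
    (Nat.card {l : List (ℕ × SilColor) // IsSiladicColoured l ∧
      (∀ p ∈ l, silRank p.1 p.2 ≤ silRank k x) ∧
      silN l = m 0 ∧ silU l = m 1 ∧ silV l = m 2} : ℤ)

section SilAux
open SilColor List

abbrev SilRel : ℕ × SilColor → ℕ × SilColor → Prop :=
  fun p q => q.1 + silMinDiff p.1 p.2 q.2 ≤ p.1

lemma silMinDiff_pos (k : ℕ) (x y : SilColor) : 1 ≤ silMinDiff k x y := by
  unfold silMinDiff; split <;> cases x <;> cases y <;> simp [silRowOdd, silRowEven]

lemma sil_sizes_lt {p : ℕ × SilColor} {t : List (ℕ × SilColor)}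
    (h : (p :: t).Chain' SilRel) : ∀ q ∈ t, q.1 < p.1 := by
  induction t generalizing p with
  | nil => simp
  | cons q t ih =>
    intro r hr
    obtain ⟨h1, h2⟩ := List.isChain_cons_cons.mp h
    have hq : q.1 < p.1 := by have := silMinDiff_pos p.1 p.2 q.2; simp only [SilRel] at h1; omega
    rcases List.mem_cons.mp hr with rfl | hr
    · exact hq
    · exact lt_trans (ih h2 r hr) hq

lemma sil_rank_split {k : ℕ} (hk : 1 ≤ k) (p : ℕ × SilColor) :
    silRank p.1 p.2 ≤ silRank (2*k+1) ab ↔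
      (silRank p.1 p.2 ≤ silRank (2*k) b ∨ p = (2*k+1, ab)) := by
  obtain ⟨n, c⟩ := p
  cases c <;> simp [silRank, Prod.ext_iff] <;> push_cast <;> omega

lemma sil_rank_b_le {k : ℕ} : silRank (2*k) b ≤ silRank (2*k+1) ab := by
  simp [silRank]; push_cast; omega

lemma sil_rank_a_le {k : ℕ} (hk : 1 ≤ k) : silRank (2*k-1) a ≤ silRank (2*k+1) ab := by
  simp [silRank]; omega

lemma sil_diff_iff {k : ℕ} (hk : 1 ≤ k) (q : ℕ × SilColor) (hv : SilValidPart q) :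
    q.1 + silMinDiff (2*k+1) ab q.2 ≤ 2*k+1 ↔ silRank q.1 q.2 ≤ silRank (2*k-1) a := by
  obtain ⟨n, c⟩ := q
  obtain ⟨h1, h2, h3⟩ := hv
  have hm : (2*k+1) % 2 = 1 := by omega
  cases c <;> simp_all [silMinDiff, silRowOdd, silRank] <;> omega

lemma sil_head_size_bound {k : ℕ} (hk : 1 ≤ k) (q : ℕ × SilColor) (hv : SilValidPart q)
    (h : silRank q.1 q.2 ≤ silRank (2*k-1) a) : q.1 ≤ 2*k-1 := by
  obtain ⟨n, c⟩ := q
  obtain ⟨h1, h2, h3⟩ := hv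
  cases c <;> simp_all [silRank] <;> omega

lemma sil_rank_le_of_size_le {k : ℕ} (hk : 1 ≤ k) (q : ℕ × SilColor) (h : q.1 ≤ 2*k-2) :
    silRank q.1 q.2 ≤ silRank (2*k-1) a := by
  obtain ⟨n, c⟩ := q
  cases c <;> simp_all [silRank] <;> omega

lemma sil_rank_lower (p : ℕ × SilColor) : 4*(p.1:ℤ) - 6 ≤ silRank p.1 p.2 := by
  obtain ⟨n, c⟩ := p; cases c <;> simp [silRank] <;> omega

end SilAux
section SilAux2
open SilColor List

lemma sil_cons_iff {k : ℕ} (hk : 1 ≤ k) (t : List (ℕ × SilColor)) :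
    (IsSiladicColoured ((2*k+1, ab) :: t) ∧
      ∀ p ∈ (2*k+1, ab) :: t, silRank p.1 p.2 ≤ silRank (2*k+1) ab) ↔
    (IsSiladicColoured t ∧ ∀ p ∈ t, silRank p.1 p.2 ≤ silRank (2*k-1) a) := by
  constructor
  · rintro ⟨⟨hval, hchain⟩, -⟩
    have hvt : ∀ p ∈ t, SilValidPart p := fun p hp => hval p (List.mem_cons_of_mem _ hp)
    refine ⟨⟨hvt, hchain.tail⟩, ?_⟩
    cases t with
    | nil => simp
    | cons q t' =>
      obtain ⟨h1, h2⟩ := List.isChain_cons_cons.mp hchain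
      have hq : silRank q.1 q.2 ≤ silRank (2*k-1) a :=
        (sil_diff_iff hk q (hvt q (List.mem_cons_self))).mp h1
      intro p hp
      rcases List.mem_cons.mp hp with rfl | hp
      · exact hq
      · have hlt : p.1 < q.1 := sil_sizes_lt h2 p hp
        have hqb : q.1 ≤ 2*k-1 := sil_head_size_bound hk q (hvt q (List.mem_cons_self)) hq
        exact sil_rank_le_of_size_le hk p (by omega)
  · rintro ⟨⟨hval, hchain⟩, hrank⟩
    have hvhead : SilValidPart (2*k+1, ab) := by
      refine ⟨by omega, by simp, by omega⟩
    refine ⟨⟨?_, ?_⟩, ?_⟩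
    · intro p hp
      rcases List.mem_cons.mp hp with rfl | hp
      · exact hvhead
      · exact hval p hp
    · apply List.isChain_cons.mpr
      refine ⟨?_, hchain⟩
      intro q hq
      have hqt : q ∈ t := by
        cases t with
        | nil => simp at hq
        | cons r t' => simp at hq; subst hq; exact List.mem_cons_self
      exact (sil_diff_iff hk q (hval q hqt)).mpr (hrank q hqt)
    · intro p hp
      rcases List.mem_cons.mp hp with rfl | hp
      · exact le_refl _
      · exact le_trans (hrank p hp) (sil_rank_a_le hk)

lemma sil_head_eq {k : ℕ} (hk : 1 ≤ k) {l : List (ℕ × SilColor)}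
    (hsil : IsSiladicColoured l)
    (hrank : ∀ p ∈ l, silRank p.1 p.2 ≤ silRank (2*k+1) ab)
    (hmem : (2*k+1, ab) ∈ l) : ∃ t, l = (2*k+1, ab) :: t := by
  obtain ⟨hval, hchain⟩ := hsil
  cases l with
  | nil => simp at hmem
  | cons p t =>
    rcases List.mem_cons.mp hmem with h | h
    · exact ⟨t, by rw [h]⟩
    · exfalso
      have hlt : 2*k+1 < p.1 := sil_sizes_lt hchain _ h
      have h1 := sil_rank_lower p
      have h2 := hrank p (List.mem_cons_self)
      have h3 : silRank (2*k+1) ab = 8*(k:ℤ) := by simp [silRank]; push_cast; ring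
      rw [h3] at h2
      omega
end SilAux2
section SilAux3
open SilColor List

instance : Fintype SilColor :=
  ⟨{SilColor.a, SilColor.b, SilColor.ab, SilColor.a2, SilColor.b2}, by intro x; cases x <;> simp⟩

lemma sil_finite (n : ℕ) :
    {l : List (ℕ × SilColor) | (∀ p ∈ l, 0 < p.1) ∧ silN l = n}.Finite := by
  have h1 : {l : List (Fin (n+1) × SilColor) | l.length ≤ n}.Finite :=
    List.finite_length_le _ n
  apply Set.Finite.subset (h1.image (List.map fun p => ((p.1 : ℕ), p.2)))
  rintro l ⟨hpos, hsum⟩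
  have hle : ∀ p ∈ l, p.1 ≤ n := by
    intro p hp
    have : p.1 ≤ (l.map Prod.fst).sum :=
      List.single_le_sum (by simp) _ (List.mem_map_of_mem hp)
    exact this.trans hsum.le
  refine ⟨l.map (fun p => ((⟨min p.1 n, by omega⟩ : Fin (n+1)), p.2)), ?_, ?_⟩
  · simp only [Set.mem_setOf_eq, List.length_map]
    have : l.length ≤ (l.map Prod.fst).sum := by
      have := List.length_le_sum_of_one_le (l.map Prod.fst) (by
        intro i hi
        obtain ⟨p, hp, rfl⟩ := List.mem_map.mp hi
        exact hpos p hp)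
      simpa using this
    calc l.length ≤ (l.map Prod.fst).sum := this
      _ = n := hsum
  · rw [List.map_map]
    conv_rhs => rw [show l = l.map id from (List.map_id l).symm]
    apply List.map_congr_left
    intro p hp
    have := hle p hp
    simp [Function.comp, min_eq_left this]

lemma silN_cons (p : ℕ × SilColor) (t : List (ℕ × SilColor)) :
    silN (p :: t) = p.1 + silN t := by simp [silN]

lemma silU_cons_ab {n : ℕ} (t : List (ℕ × SilColor)) :
    silU ((n, ab) :: t) = 1 + silU t := by simp [silU, List.countP_cons]; ring

lemma silV_cons_ab {n : ℕ} (t : List (ℕ × SilColor)) :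
    silV ((n, ab) :: t) = 1 + silV t := by simp [silV, List.countP_cons]; ring

lemma silN_mem_le {l : List (ℕ × SilColor)} {p : ℕ × SilColor} (hp : p ∈ l) :
    p.1 ≤ silN l :=
  List.single_le_sum (by simp) _ (List.mem_map_of_mem hp)

lemma silU_pos_of_ab {l : List (ℕ × SilColor)} {n : ℕ} (hp : (n, ab) ∈ l) : 1 ≤ silU l := by
  have : 0 < l.countP (fun p => decide (p.2 = a ∨ p.2 = ab)) :=
    List.countP_pos_iff.mpr ⟨(n, ab), hp, by simp⟩
  simp only [silU]; omega

lemma silV_pos_of_ab {l : List (ℕ × SilColor)} {n : ℕ} (hp : (n, ab) ∈ l) : 1 ≤ silV l := by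
  have : 0 < l.countP (fun p => decide (p.2 = b ∨ p.2 = ab)) :=
    List.countP_pos_iff.mpr ⟨(n, ab), hp, by simp⟩
  simp only [silV]; omega

end SilAux3
open MvPowerSeries in
/-- G_{(2k+1)_{ab}}(q;a,b) = G_{(2k)_b}(q;a,b) + a b q^{2k+1} G_{(2k−1)_a}(q;a,b)
for k ≥ 1. -/
theorem silG_rec (k : ℕ) (hk : 1 ≤ k) :
    silG (2 * k + 1) ab =
      silG (2 * k) b +
        X 1 * X 2 * (X 0 : MvPowerSeries (Fin 3) ℤ) ^ (2 * k + 1) * silG (2 * k - 1) a := by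
  classical
  apply MvPowerSeries.ext
  intro m
  set δ : Fin 3 →₀ ℕ :=
    Finsupp.single 1 1 + Finsupp.single 2 1 + Finsupp.single 0 (2*k+1) with hδdef
  have hmon : (X 1 * X 2 * (X 0 : MvPowerSeries (Fin 3) ℤ) ^ (2*k+1))
      = monomial δ (1 : ℤ) := by
    rw [X_def, X_def, X_pow_eq, monomial_mul_monomial, monomial_mul_monomial, one_mul,
      one_mul, hδdef]
  rw [map_add, hmon, coeff_monomial_mul]
  have hδ0 : δ 0 = 2*k+1 := by simp [hδdef, Finsupp.single_apply]
  have hδ1 : δ 1 = 1 := by simp [hδdef, Finsupp.single_apply]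
  have hδ2 : δ 2 = 1 := by simp [hδdef, Finsupp.single_apply]
  have hδle : δ ≤ m ↔ (2*k+1 ≤ m 0 ∧ 1 ≤ m 1 ∧ 1 ≤ m 2) := by
    rw [Finsupp.le_def]
    constructor
    · intro h
      exact ⟨hδ0 ▸ h 0, hδ1 ▸ h 1, hδ2 ▸ h 2⟩
    · rintro ⟨h0, h1, h2⟩ i
      fin_cases i
      · simpa [hδ0] using h0
      · simpa [hδ1] using h1
      · simpa [hδ2] using h2
  simp only [coeff_apply, silG, one_mul]
  by_cases hle : δ ≤ m
  · rw [if_pos hle]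
    obtain ⟨hm0, hm1, hm2⟩ := hδle.mp hle
    have hs0 : (m - δ) 0 = m 0 - (2*k+1) := by rw [Finsupp.tsub_apply, hδ0]
    have hs1 : (m - δ) 1 = m 1 - 1 := by rw [Finsupp.tsub_apply, hδ1]
    have hs2 : (m - δ) 2 = m 2 - 1 := by rw [Finsupp.tsub_apply, hδ2]
    set A : Set (List (ℕ × SilColor)) := {l | IsSiladicColoured l ∧
      (∀ p ∈ l, silRank p.1 p.2 ≤ silRank (2*k+1) ab) ∧
      silN l = m 0 ∧ silU l = m 1 ∧ silV l = m 2} with hA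
    set B : Set (List (ℕ × SilColor)) := {l | IsSiladicColoured l ∧
      (∀ p ∈ l, silRank p.1 p.2 ≤ silRank (2*k) b) ∧
      silN l = m 0 ∧ silU l = m 1 ∧ silV l = m 2} with hB
    set C : Set (List (ℕ × SilColor)) := {l | IsSiladicColoured l ∧
      (∀ p ∈ l, silRank p.1 p.2 ≤ silRank (2*k-1) a) ∧
      silN l = (m - δ) 0 ∧ silU l = (m - δ) 1 ∧ silV l = (m - δ) 2} with hC
    have hconsinj : Function.Injective (List.cons ((2*k+1 : ℕ), ab)) :=
      fun s t h => by injection h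
    have key : A = B ∪ (List.cons ((2*k+1 : ℕ), ab)) '' C := by
      ext l
      simp only [hA, hB, hC, Set.mem_setOf_eq, Set.mem_union, Set.mem_image]
      constructor
      · rintro ⟨hsil, hrank, hN, hU, hV⟩
        by_cases hb : ∀ p ∈ l, silRank p.1 p.2 ≤ silRank (2*k) b
        · exact Or.inl ⟨hsil, hb, hN, hU, hV⟩
        · push_neg at hb
          obtain ⟨p, hp, hgt⟩ := hb
          have hpe : p = (2*k+1, ab) := by
            rcases (sil_rank_split hk p).mp (hrank p hp) with h | h
            · exact absurd h (not_le.mpr hgt)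
            · exact h
          subst hpe
          obtain ⟨t, rfl⟩ := sil_head_eq hk hsil hrank hp
          right
          obtain ⟨hsilt, hrankt⟩ := (sil_cons_iff hk t).mp ⟨hsil, hrank⟩
          rw [silN_cons] at hN
          rw [silU_cons_ab] at hU
          rw [silV_cons_ab] at hV
          exact ⟨t, ⟨hsilt, hrankt, by omega, by omega, by omega⟩, rfl⟩
      · rintro (⟨hsil, hrank, hN, hU, hV⟩ | ⟨t, ⟨hsilt, hrankt, hN, hU, hV⟩, rfl⟩)
        · exact ⟨hsil, fun p hp => le_trans (hrank p hp) sil_rank_b_le, hN, hU, hV⟩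
        · obtain ⟨hsil, hrank⟩ := (sil_cons_iff hk t).mpr ⟨hsilt, hrankt⟩
          refine ⟨hsil, hrank, ?_, ?_, ?_⟩
          · rw [silN_cons]; omega
          · rw [silU_cons_ab]; omega
          · rw [silV_cons_ab]; omega
    have hdisj : Disjoint B ((List.cons ((2*k+1 : ℕ), ab)) '' C) := by
      rw [Set.disjoint_left]
      rintro l hBl ⟨t, -, rfl⟩
      have := hBl.2.1 (2*k+1, ab) (List.mem_cons_self)
      simp only [silRank] at this
      push_cast at this
      omega
    have hAfin : A.Finite := by
      apply (sil_finite (m 0)).subset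
      rintro l ⟨hsil, -, hN, -, -⟩
      exact ⟨fun p hp => (hsil.1 p hp).1, hN⟩
    have hBfin : B.Finite := by
      apply hAfin.subset
      rw [key]
      exact Set.subset_union_left
    have hCfin : ((List.cons ((2*k+1 : ℕ), ab)) '' C).Finite := by
      apply hAfin.subset
      rw [key]
      exact Set.subset_union_right
    have hcount : A.ncard = B.ncard + C.ncard := by
      rw [key, Set.ncard_union_eq hdisj hBfin hCfin,
        Set.ncard_image_of_injective _ hconsinj]
    have e1 : Nat.card {l : List (ℕ × SilColor) // IsSiladicColoured l ∧
        (∀ p ∈ l, silRank p.1 p.2 ≤ silRank (2*k+1) ab) ∧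
        silN l = m 0 ∧ silU l = m 1 ∧ silV l = m 2} = A.ncard :=
      Nat.card_coe_set_eq A
    have e2 : Nat.card {l : List (ℕ × SilColor) // IsSiladicColoured l ∧
        (∀ p ∈ l, silRank p.1 p.2 ≤ silRank (2*k) b) ∧
        silN l = m 0 ∧ silU l = m 1 ∧ silV l = m 2} = B.ncard :=
      Nat.card_coe_set_eq B
    have e3 : Nat.card {l : List (ℕ × SilColor) // IsSiladicColoured l ∧
        (∀ p ∈ l, silRank p.1 p.2 ≤ silRank (2*k-1) a) ∧
        silN l = (m - δ) 0 ∧ silU l = (m - δ) 1 ∧ silV l = (m - δ) 2} = C.ncard :=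
      Nat.card_coe_set_eq C
    rw [e1, e2, e3, hcount]
    push_cast
    ring
  · rw [if_neg hle, add_zero]
    have hiff : ∀ l : List (ℕ × SilColor),
        (IsSiladicColoured l ∧ (∀ p ∈ l, silRank p.1 p.2 ≤ silRank (2*k+1) ab) ∧
          silN l = m 0 ∧ silU l = m 1 ∧ silV l = m 2) ↔
        (IsSiladicColoured l ∧ (∀ p ∈ l, silRank p.1 p.2 ≤ silRank (2*k) b) ∧
          silN l = m 0 ∧ silU l = m 1 ∧ silV l = m 2) := by
      intro l
      constructor
      · rintro ⟨hsil, hrank, hN, hU, hV⟩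
        refine ⟨hsil, ?_, hN, hU, hV⟩
        intro p hp
        rcases (sil_rank_split hk p).mp (hrank p hp) with h | h
        · exact h
        · exfalso
          subst h
          apply hle
          rw [hδle]
          refine ⟨?_, ?_, ?_⟩
          · rw [← hN]; exact silN_mem_le hp
          · rw [← hU]; exact silU_pos_of_ab hp
          · rw [← hV]; exact silV_pos_of_ab hp
      · rintro ⟨hsil, hrank, hN, hU, hV⟩
        exact ⟨hsil, fun p hp => le_trans (hrank p hp) sil_rank_b_le, hN, hU, hV⟩
    exact congrArg Nat.cast (Nat.card_congr (Equiv.subtypeEquivRight hiff))
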